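/- If the Halting problem is undecidable, then for the construction of Theorem 4.4, the class H is not properly agnostically U-robustly CPAC learnable: any computable proper learner A with a sample-size bound m for accuracy ε = 1/8 and confidence δ = 1/8, run on the single possible sample of size m from the point-mass distribution D_i on ((i,0),1), would yield a decision procedure for whether T_i halts on the empty input. -/

import Mathlib

open Nat.Partrec (Code)

/-- `T_i` halts within `k` steps on the empty input. -/
def haltsWithin (i k : ℕ) : Prop :=
  (Nat.Partrec.Code.evaln k (Denumerable.ofNat Code i) 0).isSome = true

/-- The row-initial-segment hypothesis `h_{i,j}` on `ℕ × ℕ`. -/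
def hRow (i j : ℕ) (x : ℕ × ℕ) : Bool := decide (x.1 = i ∧ x.2 ≤ j)

instance (i k : ℕ) : Decidable (haltsWithin i k) := by
  unfold haltsWithin; infer_instance

/-- The step-counting perturbation type of Theorem 4.4. -/
def Ustep : ℕ × ℕ → Set (ℕ × ℕ)
  | (i, 0) => {(i, 0)} ∪ {q | ∃ k, q = (i, k) ∧ ¬ haltsWithin i k}
  | (i, j + 1) =>
    if haltsWithin i (j + 1) then {(i, j + 1)} else {(i, j + 1), (i, 0)}

/-- The robust loss of hypothesis `f` on `(x,y)` with respect to `U`. -/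
def RobLoss {α : Type*} (U : α → Set α) (f : α → Bool) (x : α) (y : Bool) : Prop :=
  ∃ z ∈ U x, f z ≠ y

open Classical in
/-- The robust risk of `h_{a,b}` under the point-mass distribution `D_i` on
`((i,0),1)`: it is `1` if the robust loss on that point is incurred and `0`
otherwise. -/
noncomputable def riskD (i a b : ℕ) : ℝ :=
  if RobLoss Ustep (hRow a b) (i, 0) true then 1 else 0

lemma haltsWithin_mono {i k k' : ℕ} (h : k ≤ k') (hk : haltsWithin i k) :
    haltsWithin i k' := by
  unfold haltsWithin at *
  rw [Option.isSome_iff_exists] at *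
  obtain ⟨x, hx⟩ := hk
  exact ⟨x, Nat.Partrec.Code.evaln_mono h hx⟩

lemma robLoss_iff (i a b : ℕ) :
    RobLoss Ustep (hRow a b) (i, 0) true ↔ ¬(a = i ∧ haltsWithin i (b + 1)) := by
  constructor
  · rintro ⟨z, hz, hne⟩ ⟨rfl, hH⟩
    rcases hz with hz | ⟨k, rfl, hk⟩
    · apply hne
      simp only [Set.mem_singleton_iff] at hz
      subst hz
      simp [hRow]
    · apply hne
      have hkb : k ≤ b := by
        by_contra hkb
        exact hk (haltsWithin_mono (by omega) hH)
      simp [hRow, hkb]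
  · intro h
    by_cases hai : a = i
    · subst hai
      have hH : ¬ haltsWithin a (b + 1) := fun hh => h ⟨rfl, hh⟩
      refine ⟨(a, b + 1), Or.inr ⟨b + 1, rfl, hH⟩, ?_⟩
      simp [hRow]
    · refine ⟨(i, 0), Or.inl rfl, ?_⟩
      simp only [hRow, ne_eq, decide_eq_true_eq, not_and]
      intro h'
      exact absurd h'.symm hai

lemma riskD_mem (i a b : ℕ) : riskD i a b = 0 ∨ riskD i a b = 1 := by
  unfold riskD; split <;> simp

theorem not_properly_agnostically_robustly_CPAC
    (hHalt : ¬ ∃ d : ℕ → Bool, Computable d ∧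
      ∀ i, d i = true ↔ ∃ k, haltsWithin i k) :
    ¬ ∃ (A : List ((ℕ × ℕ) × Bool) → ℕ × ℕ) (M : ℕ), Computable A ∧
      ∀ i : ℕ,
        riskD i (A (List.replicate M ((i, 0), true))).1
            (A (List.replicate M ((i, 0), true))).2 ≤
          sInf {r : ℝ | ∃ a b : ℕ, r = riskD i a b} + 1 / 8 := by
  rintro ⟨A, M, hA, hguar⟩
  apply hHalt
  refine ⟨fun i =>
    decide ((A (List.replicate M ((i, 0), true))).1 = i) &&
      (Nat.Partrec.Code.evaln ((A (List.replicate M ((i, 0), true))).2 + 1)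
        (Denumerable.ofNat Code i) 0).isSome, ?_, ?_⟩
  · -- computability
    have hrep : Computable fun i : ℕ => List.replicate M ((i, 0), true) := by
      clear hguar
      induction M with
      | zero => exact Computable.const []
      | succ n ih =>
        have hx : Computable fun i : ℕ => (((i, 0), true) : (ℕ × ℕ) × Bool) :=
          (Computable.id.pair (Computable.const 0)).pair (Computable.const true)
        exact (Computable.list_cons.comp hx ih).of_eq fun i => rfl
    have hAi : Computable fun i : ℕ => A (List.replicate M ((i, 0), true)) :=
      hA.comp hrep
    have h1 : Computable fun i : ℕ =>
        (decide ((A (List.replicate M ((i, 0), true))).1 = i) : Bool) :=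
      Primrec.eq.decide.to_comp.comp (Computable.fst.comp hAi) Computable.id
    have h2 : Computable fun i : ℕ =>
        (Nat.Partrec.Code.evaln ((A (List.replicate M ((i, 0), true))).2 + 1)
          (Denumerable.ofNat Code i) 0).isSome := by
      have hev : Computable fun i : ℕ =>
          Nat.Partrec.Code.evaln ((A (List.replicate M ((i, 0), true))).2 + 1)
            (Denumerable.ofNat Code i) 0 :=
        Nat.Partrec.Code.primrec_evaln.to_comp.comp
          (((Computable.succ.comp (Computable.snd.comp hAi)).pair
            ((Primrec.ofNat Code).to_comp)).pair (Computable.const 0))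
      exact Primrec.option_isSome.to_comp.comp hev
    exact Primrec.and.to_comp.comp h1 h2
  · intro i
    rw [Bool.and_eq_true, decide_eq_true_eq]
    constructor
    · rintro ⟨_, hH⟩
      exact ⟨_, hH⟩
    · rintro ⟨K, hK⟩
      set a := (A (List.replicate M ((i, 0), true))).1 with ha
      set b := (A (List.replicate M ((i, 0), true))).2 with hb
      have h0mem : (0 : ℝ) ∈ {r : ℝ | ∃ a b : ℕ, r = riskD i a b} := by
        refine ⟨i, K, ?_⟩
        unfold riskD
        rw [if_neg]
        rw [robLoss_iff, not_not]
        exact ⟨rfl, haltsWithin_mono (Nat.le_succ K) hK⟩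
      have hbdd : BddBelow {r : ℝ | ∃ a b : ℕ, r = riskD i a b} := by
        refine ⟨0, ?_⟩
        rintro r ⟨a', b', rfl⟩
        rcases riskD_mem i a' b' with h | h <;> rw [h] <;> norm_num
      have hinf : sInf {r : ℝ | ∃ a b : ℕ, r = riskD i a b} ≤ 0 :=
        csInf_le hbdd h0mem
      have hle := hguar i
      have hsmall : riskD i a b ≤ 1 / 8 := le_trans hle (by linarith)
      have hz : riskD i a b = 0 := by
        rcases riskD_mem i a b with h | h
        · exact h
        · rw [h] at hsmall; norm_num at hsmall
      have hnl : ¬ RobLoss Ustep (hRow a b) (i, 0) true := by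
        intro hR
        unfold riskD at hz
        rw [if_pos hR] at hz
        norm_num at hz
      rw [robLoss_iff, not_not] at hnl
      exact ⟨hnl.1, hnl.2⟩
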